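/- Let m ≥ 1, let T > 0, and let h : ℝ^m → ℝ^m be a map for which there exists K > 0 with ‖h(x)‖ ≤ K · max{‖x‖, 1} for all x ∈ ℝ^m. Set C := 2(K+1). Then for every x ∈ ℝ^m with ‖x‖ ≥ max{2T, 1} such that the closed line segment joining −x and h(x) intersects the closed ball of radius T centered at the origin, the distance from h(x) to the ray {s·x : s ≥ 0} is at most C·T. -/

import Mathlib

open Metric

noncomputable section

abbrev Euc (m : ℕ) : Type := EuclideanSpace ℝ (Fin m)

/-- If `‖h(x)‖ ≤ K · max{‖x‖, 1}` for all `x`, then with `C = 2(K+1)`: for every `x`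
with `‖x‖ ≥ max{2T, 1}` such that the segment from `-x` to `h(x)` meets the closed
ball of radius `T` about the origin, the distance from `h(x)` to the ray
`{s • x : s ≥ 0}` is at most `C·T`. -/
theorem dist_hx_to_ray_le (m : ℕ) (hm : 1 ≤ m) (T : ℝ) (hT : 0 < T)
    (h : Euc m → Euc m) (K : ℝ) (hK : 0 < K)
    (hgrowth : ∀ x : Euc m, ‖h x‖ ≤ K * max ‖x‖ 1) :
    ∀ x : Euc m, max (2 * T) 1 ≤ ‖x‖ →
      (segment ℝ (-x) (h x) ∩ closedBall (0 : Euc m) T).Nonempty →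
      infDist (h x) {z : Euc m | ∃ s : ℝ, 0 ≤ s ∧ z = s • x} ≤ 2 * (K + 1) * T := by
  intro x hx ⟨y, hySeg, hyBall⟩
  have hx2T : 2 * T ≤ ‖x‖ := le_trans (le_max_left _ _) hx
  have hx1 : (1 : ℝ) ≤ ‖x‖ := le_trans (le_max_right _ _) hx
  have hxpos : (0 : ℝ) < ‖x‖ := lt_of_lt_of_le one_pos hx1
  have hyT : ‖y‖ ≤ T := by simpa using mem_closedBall_zero_iff.mp hyBall
  obtain ⟨a, b, ha, hb, hab, hy⟩ := hySeg
  -- b > 0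
  have hbpos : 0 < b := by
    rcases lt_or_eq_of_le hb with hb' | hb'
    · exact hb'
    · exfalso
      have ha1 : a = 1 := by linarith
      have : y = -x := by rw [← hy, ← hb', ha1]; simp
      rw [this, norm_neg] at hyT
      linarith
  -- growth bound with max replaced by ‖x‖
  have hgx : ‖h x‖ ≤ K * ‖x‖ := by
    have := hgrowth x
    rwa [max_eq_left hx1] at this
  -- a • x = b • h x - y
  have hax : a • x = b • h x - y := by
    rw [← hy, smul_neg]; abel
  have haxn : a * ‖x‖ ≤ b * (K * ‖x‖) + T := by
    calc a * ‖x‖ = ‖a • x‖ := by rw [norm_smul, Real.norm_eq_abs, abs_of_nonneg ha]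
    _ = ‖b • h x - y‖ := by rw [hax]
    _ ≤ ‖b • h x‖ + ‖y‖ := norm_sub_le _ _
    _ ≤ b * ‖h x‖ + T := by
        rw [norm_smul, Real.norm_eq_abs, abs_of_nonneg hb]; linarith
    _ ≤ b * (K * ‖x‖) + T := by nlinarith
  -- deduce b ≥ 1/(2(K+1))
  have hKpos : (0:ℝ) < 2 * (K + 1) := by linarith
  have hbge : 1 / (2 * (K + 1)) ≤ b := by
    have hT' : T ≤ ‖x‖ / 2 := by linarith
    have ha' : a = 1 - b := by linarith
    have : (1 - b) * ‖x‖ ≤ b * (K * ‖x‖) + ‖x‖ / 2 := by nlinarith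
    have hb' : 1 / 2 ≤ b * (K + 1) := by nlinarith
    rw [div_le_iff₀ hKpos]; nlinarith
  -- the ray point
  have hmem : ((a / b) • x) ∈ {z : Euc m | ∃ s : ℝ, 0 ≤ s ∧ z = s • x} :=
    ⟨a / b, div_nonneg ha hb, rfl⟩
  have hdist : dist (h x) ((a / b) • x) ≤ T / b := by
    have key : h x - (a / b) • x = (1 / b) • y := by
      rw [← hy, smul_add, smul_smul, smul_neg, smul_smul]
      rw [one_div, inv_mul_cancel₀ hbpos.ne']
      field_simp
      rw [one_smul]
      abel
    rw [dist_eq_norm, key, norm_smul, Real.norm_eq_abs,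
      abs_of_nonneg (by positivity : (0:ℝ) ≤ 1 / b)]
    calc (1/b) * ‖y‖ ≤ (1/b) * T := by gcongr
      _ = T / b := by ring
  calc infDist (h x) _ ≤ dist (h x) ((a / b) • x) := infDist_le_dist_of_mem hmem
    _ ≤ T / b := hdist
    _ ≤ 2 * (K + 1) * T := by
        rw [div_le_iff₀ hbpos]
        have h1 : 1 ≤ b * (2 * (K + 1)) := (div_le_iff₀ hKpos).mp hbge
        nlinarith
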